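/- A field K is real closed if and only if K is perfect, char(K) ≠ 2, and the group of K-automorphisms of its algebraic closure K̄ has order exactly 2. -/

import Mathlib

open Polynomial Module
open Polynomial

private lemma fixed_mem_range {K L : Type*} [Field K] [Field L] [Algebra K L]
    [Algebra.IsAlgebraic K L] [Normal K L] [Algebra.IsSeparable K L] [IsAlgClosed L]
    (x : L) (hx : ∀ σ : L ≃ₐ[K] L, σ x = x) : x ∈ (algebraMap K L).range := by
  have halg : IsAlgebraic K x := Algebra.IsAlgebraic.isAlgebraic x
  have hint : IsIntegral K x := halg.isIntegral
  set p := minpoly K x with hp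
  have hsep : p.Separable := Algebra.IsSeparable.isSeparable K x
  have hsplit : (p.map (algebraMap K L)).Splits := IsAlgClosed.splits _
  have hcard : (p.map (algebraMap K L)).roots.card = p.natDegree :=
    by rw [← hsplit.natDegree_eq_card_roots, natDegree_map]
  have hnodup : (p.map (algebraMap K L)).roots.Nodup := nodup_roots hsep.map
  have hallx : ∀ y ∈ (p.map (algebraMap K L)).roots, y = x := by
    intro y hy
    have hy0 : aeval y p = 0 := by
      have := isRoot_of_mem_roots hy
      rwa [IsRoot, eval_map, ← aeval_def] at this
    obtain ⟨σ, hσ⟩ := minpoly.exists_algEquiv_of_root halg hy0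
    exact σ.injective (hσ.trans (hx σ).symm)
  have hle : p.natDegree ≤ 1 := by
    classical
    rw [← hcard]
    have h1 : Multiset.count x (p.map (algebraMap K L)).roots ≤ 1 :=
      Multiset.nodup_iff_count_le_one.mp hnodup x
    have h2 : Multiset.count x (p.map (algebraMap K L)).roots
        = Multiset.card (p.map (algebraMap K L)).roots :=
      Multiset.count_eq_card.mpr fun b hb => (hallx b hb).symm
    omega
  have hpos : 0 < p.natDegree := minpoly.natDegree_pos hint
  have hdeg : p.degree = 1 := by
    rw [degree_eq_natDegree (minpoly.ne_zero hint)]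
    exact_mod_cast le_antisymm hle hpos
  exact minpoly.mem_range_of_degree_eq_one K x hdeg

private lemma quad_aux {F L : Type*} [Field F] [Field L] [Algebra F L] [IsAlgClosed L]
    [FiniteDimensional F L]
    (h2 : (2 : F) ≠ 0) (hrank : Module.finrank F L = 2) :
    (¬ ∃ x : F, x ^ 2 = -1) ∧
      ∀ i : L, i ^ 2 = -1 → IntermediateField.adjoin F {i} = ⊤ := by
  have hinj := (algebraMap F L).injective
  -- linear independence of {1, w} for w outside the base field
  have indep : ∀ w : L, w ∉ Set.range (algebraMap F L) →
      LinearIndependent F ![(1 : L), w] := by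
    intro w hw
    rw [LinearIndependent.pair_iff]
    intro s t hst
    rw [Algebra.smul_def, Algebra.smul_def, mul_one] at hst
    have ht : t = 0 := by
      by_contra ht
      apply hw
      refine ⟨-s / t, ?_⟩
      have htL : algebraMap F L t ≠ 0 := fun h => ht (hinj (by rw [h, map_zero]))
      rw [map_div₀, map_neg]
      field_simp
      linear_combination -hst
    subst ht
    rw [map_zero, zero_mul, add_zero] at hst
    exact ⟨hinj (by rw [hst, map_zero]), rfl⟩
  -- every element is u + v * w
  have rep : ∀ w : L, w ∉ Set.range (algebraMap F L) →
      ∀ z : L, ∃ u v : F, z = algebraMap F L u + algebraMap F L v * w := by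
    intro w hw z
    have hli := indep w hw
    let B := basisOfLinearIndependentOfCardEqFinrank hli (by simp [hrank])
    have hB : ⇑B = ![(1 : L), w] := coe_basisOfLinearIndependentOfCardEqFinrank hli _
    have hz := B.sum_repr z
    rw [Fin.sum_univ_two] at hz
    refine ⟨B.repr z 0, B.repr z 1, ?_⟩
    conv_lhs => rw [← hz]
    rw [hB]
    simp [Algebra.smul_def]
  -- an element outside the base field
  obtain ⟨α, hα⟩ : ∃ α : L, α ∉ Set.range (algebraMap F L) := by
    by_contra h
    push_neg at h
    have hsurj : Function.Surjective (algebraMap F L) := fun z => h z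
    have hbij : Function.Bijective (Algebra.ofId F L) := by
      constructor
      · intro a b hab
        exact hinj (by simpa [Algebra.ofId_apply] using hab)
      · intro z
        obtain ⟨a, ha⟩ := hsurj z
        exact ⟨a, by simpa [Algebra.ofId_apply] using ha⟩
    have := (AlgEquiv.ofBijective (Algebra.ofId F L) hbij).toLinearEquiv.finrank_eq
    rw [Module.finrank_self, hrank] at this
    omega
  have hαint : IsIntegral F α := IsIntegral.of_finite F α
  set p := minpoly F α with hpdef
  have hdvd : p.natDegree ∣ 2 := hrank ▸ minpoly.degree_dvd hαint
  have hne1 : p.natDegree ≠ 1 := by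
    intro h1
    have hdeg : p.degree = 1 := by
      rw [degree_eq_natDegree (minpoly.ne_zero hαint), h1]; rfl
    obtain ⟨r, hr⟩ := minpoly.mem_range_of_degree_eq_one F α hdeg
    exact hα ⟨r, hr⟩
  have hps : p.natDegree = 2 := by
    rcases (Nat.dvd_prime Nat.prime_two).mp hdvd with h | h
    · exact absurd h hne1
    · exact h
  set b := p.coeff 1 with hbdef
  set c := p.coeff 0 with hcdef
  have hco2 : p.coeff 2 = 1 := by
    have hm := minpoly.monic hαint
    rw [Monic, leadingCoeff, hps] at hm
    exact hm
  have halpha : α ^ 2 = -(algebraMap F L b * α) - algebraMap F L c := by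
    have h := (aeval_eq_sum_range (R := F) (p := p) α).symm.trans (minpoly.aeval F α)
    rw [hps] at h
    simp only [Finset.sum_range_succ, Finset.sum_range_zero, zero_add, Algebra.smul_def,
      hco2, map_one, one_mul, pow_zero, pow_one, mul_one] at h
    linear_combination h
  set m := b / 2 with hm
  set β : L := α + algebraMap F L m with hβdef
  have hβ : β ∉ Set.range (algebraMap F L) := by
    rintro ⟨r, hr⟩
    exact hα ⟨r - m, by rw [map_sub, hr]; ring⟩
  set d := m ^ 2 - c with hddef
  have hbm2 : (2 : L) * algebraMap F L m = algebraMap F L b := by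
    rw [← map_ofNat (algebraMap F L) 2, ← map_mul]
    congr 1
    rw [hm]
    field_simp
  have hβ2 : β ^ 2 = algebraMap F L d := by
    rw [hddef, map_sub, map_pow]
    linear_combination halpha + α * hbm2
  have hdns : ∀ e : F, e ^ 2 ≠ d := by
    intro e he
    have hz : (β - algebraMap F L e) * (β + algebraMap F L e) = 0 := by
      have h' : algebraMap F L e ^ 2 = algebraMap F L d := by rw [← map_pow, he]
      linear_combination hβ2 - h'
    rcases mul_eq_zero.mp hz with h | h
    · exact hβ ⟨e, by linear_combination -h⟩
    · exact hβ ⟨-e, by rw [map_neg]; linear_combination -h⟩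
  have main : ¬ ∃ x : F, x ^ 2 = -1 := by
    rintro ⟨x, hx⟩
    obtain ⟨γ, hγ⟩ := IsAlgClosed.exists_pow_nat_eq β two_pos
    obtain ⟨u, v, huv⟩ := rep β hβ γ
    have h0 : ((u ^ 2 + v ^ 2 * d) - 0) • (1 : L) + (2 * u * v - 1) • β = 0 := by
      simp only [Algebra.smul_def, map_sub, map_add, map_mul, map_pow, map_ofNat,
        map_zero, map_one, mul_one]
      linear_combination hγ - (γ + algebraMap F L u + algebraMap F L v * β) * huv
        - (algebraMap F L v) ^ 2 * hβ2
    obtain ⟨h1, h2'⟩ := LinearIndependent.pair_iff.mp (indep β hβ) _ _ h0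
    rw [sub_eq_zero] at h1 h2'
    have hv : v ≠ 0 := by
      intro hv0
      rw [hv0, mul_zero] at h2'
      exact one_ne_zero h2'.symm
    refine hdns (x * u / v) ?_
    field_simp
    linear_combination u ^ 2 * hx - h1
  refine ⟨main, fun i hi => ?_⟩
  have hinot : i ∉ Set.range (algebraMap F L) := by
    rintro ⟨x, rfl⟩
    refine main ⟨x, hinj ?_⟩
    rw [map_pow, map_neg, map_one, hi]
  rw [eq_top_iff]
  intro z _
  obtain ⟨u, v, huv⟩ := rep i hinot z
  rw [huv]
  exact add_mem (IntermediateField.algebraMap_mem _ u)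
    (mul_mem (IntermediateField.algebraMap_mem _ v)
      (IntermediateField.mem_adjoin_simple_self F i))

private lemma two_ne_zero_of_ringChar {K : Type*} [Field K] (h : ringChar K ≠ 2) : (2 : K) ≠ 0 := by
  intro h0
  apply h
  have h2 : ((2 : ℕ) : K) = 0 := by exact_mod_cast h0
  have := (ringChar.spec K 2).mp h2
  rcases (Nat.dvd_prime Nat.prime_two).mp this with h1 | h1
  · exact absurd h1 CharP.ringChar_ne_one
  · exact h1

private theorem forward_aux (K : Type*) [Field K] :
    (¬ ∃ x : K, x ^ 2 = -1) →
    (∀ i : AlgebraicClosure K, i ^ 2 = -1 → IntermediateField.adjoin K {i} = ⊤) →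
      (PerfectField K ∧ ringChar K ≠ 2 ∧
        Nat.card (AlgebraicClosure K ≃ₐ[K] AlgebraicClosure K) = 2) := by
  intro h1 h2
  set L := AlgebraicClosure K
  obtain ⟨i, hiroot⟩ := IsAlgClosed.exists_root (k := L) (X ^ 2 + C 1)
    (by rw [degree_X_pow_add_C two_pos]; exact two_ne_zero)
  have hi : i ^ 2 = -1 := by
    have : i ^ 2 + 1 = 0 := by simpa using hiroot
    linear_combination this
  have hchar : ringChar K ≠ 2 := by
    intro h
    apply h1
    refine ⟨1, ?_⟩
    have h20 : ((2 : ℕ) : K) = 0 := (ringChar.spec K 2).mpr (h ▸ dvd_refl _)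
    have h11 : (1 : K) + 1 = 0 := by push_cast at h20; linear_combination h20
    rw [one_pow]
    linear_combination h11
  have hinj := (algebraMap K L).injective
  have hinot : i ∉ Set.range (algebraMap K L) := by
    rintro ⟨x, rfl⟩
    refine h1 ⟨x, hinj ?_⟩
    rw [map_pow, map_neg, map_one, hi]
  have hiint : IsIntegral K i :=
    ⟨X ^ 2 + C 1, monic_X_pow_add_C 1 two_ne_zero, by simp [hi]⟩
  have hmdeg : (minpoly K i).natDegree = 2 := by
    have hdvd : minpoly K i ∣ X ^ 2 + C 1 := minpoly.dvd K i (by simp [hi])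
    have hle : (minpoly K i).natDegree ≤ 2 := by
      have := natDegree_le_of_dvd hdvd (X_pow_add_C_ne_zero two_pos 1)
      rwa [natDegree_X_pow_add_C] at this
    have hpos : 0 < (minpoly K i).natDegree := minpoly.natDegree_pos hiint
    have hne1 : (minpoly K i).natDegree ≠ 1 := by
      intro hd1
      have hdeg : (minpoly K i).degree = 1 := by
        rw [degree_eq_natDegree (minpoly.ne_zero hiint), hd1]; rfl
      obtain ⟨x, hx⟩ := minpoly.mem_range_of_degree_eq_one K i hdeg
      exact hinot ⟨x, hx⟩
    omega
  have htop := h2 i hi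
  haveI hfd : FiniteDimensional K L := by
    haveI h' := IntermediateField.adjoin.finiteDimensional hiint
    rw [htop] at h'
    exact (IntermediateField.topEquiv (F := K) (E := L)).toLinearEquiv.finiteDimensional
  have hrank : finrank K L = 2 := by
    have ha : finrank K (IntermediateField.adjoin K {i}) = 2 := by
      rw [IntermediateField.adjoin.finrank hiint, hmdeg]
    rw [htop] at ha
    calc finrank K L = finrank K (⊤ : IntermediateField K L) :=
          ((IntermediateField.topEquiv (F := K) (E := L)).toLinearEquiv.finrank_eq).symm
      _ = 2 := ha
  have hperf : PerfectField K := by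
    rcases CharP.char_is_prime_or_zero K (ringChar K) with hp | hp
    · haveI : Fact (ringChar K).Prime := ⟨hp⟩
      haveI : CharP K (ringChar K) := ringChar.charP K
      haveI : ExpChar K (ringChar K) := inferInstance
      haveI : PerfectRing K (ringChar K) := by
        refine PerfectRing.ofSurjective _ _ fun a => ?_
        by_contra hna
        push_neg at hna
        have hirr : Irreducible (X ^ ringChar K - C a) :=
          X_pow_sub_C_irreducible_of_prime hp
            (fun b hb => hna b (by rw [frobenius_def]; exact hb))
        obtain ⟨α, hαroot⟩ := IsAlgClosed.exists_root (k := L)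
          ((X ^ ringChar K - C a).map (algebraMap K L))
          (by rw [degree_map, degree_X_pow_sub_C hp.pos]; exact_mod_cast hp.ne_zero)
        have haev : aeval α (X ^ ringChar K - C a) = 0 := by
          rwa [IsRoot, eval_map, ← aeval_def] at hαroot
        have hmin : minpoly K α = X ^ ringChar K - C a :=
          (minpoly.eq_of_irreducible_of_monic hirr haev
            (monic_X_pow_sub_C a hp.ne_zero)).symm
        have hdvd2 : (minpoly K α).natDegree ∣ 2 :=
          hrank ▸ minpoly.degree_dvd (IsIntegral.of_finite K α)
        rw [hmin, natDegree_X_pow_sub_C] at hdvd2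
        rcases (Nat.dvd_prime Nat.prime_two).mp hdvd2 with h | h
        · exact hp.one_lt.ne' h
        · exact hchar h
      exact PerfectRing.toPerfectField K (ringChar K)
    · haveI : CharP K 0 := hp ▸ ringChar.charP K
      haveI : CharZero K := CharP.charP_to_charZero K
      exact PerfectField.ofCharZero
  haveI := hperf
  haveI : Algebra.IsSeparable K L := inferInstance
  haveI : IsGalois K L := ⟨⟩
  refine ⟨hperf, hchar, ?_⟩
  rw [IsGalois.card_aut_eq_finrank, hrank]
private theorem backward_aux (K : Type*) [Field K] (hperf : PerfectField K) (hchar : ringChar K ≠ 2)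
    (hcard : Nat.card (AlgebraicClosure K ≃ₐ[K] AlgebraicClosure K) = 2) :
    (¬ ∃ x : K, x ^ 2 = -1) ∧
    (∀ i : AlgebraicClosure K, i ^ 2 = -1 → IntermediateField.adjoin K {i} = ⊤) := by
  set L := AlgebraicClosure K
  haveI := hperf
  haveI : Algebra.IsSeparable K L := inferInstance
  haveI : Finite (L ≃ₐ[K] L) := Nat.finite_of_card_ne_zero (by rw [hcard]; norm_num)
  haveI : Fintype (L ≃ₐ[K] L) := Fintype.ofFinite _
  set F := FixedPoints.subfield (L ≃ₐ[K] L) L with hF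
  have hfr : finrank F L = 2 := by
    rw [FixedPoints.finrank_eq_card, ← Nat.card_eq_fintype_card]; exact hcard
  have hinj := (algebraMap K L).injective
  have hKF : ∀ k : K, algebraMap K L k ∈ F := by
    intro k σ
    exact σ.commutes k
  let e : K →+* F :=
  { toFun := fun k => ⟨algebraMap K L k, hKF k⟩
    map_one' := Subtype.ext (by simp)
    map_mul' := fun a b => Subtype.ext (by simp)
    map_zero' := Subtype.ext (by simp)
    map_add' := fun a b => Subtype.ext (by simp) }
  have hbij : Function.Bijective e := by
    constructor
    · intro a b hab
      exact hinj (congrArg Subtype.val hab)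
    · rintro ⟨y, hy⟩
      obtain ⟨k, hk⟩ := fixed_mem_range (K := K) y (fun σ => hy σ)
      exact ⟨k, Subtype.ext hk⟩
  let E : K ≃+* F := RingEquiv.ofBijective e hbij
  have hco : (algebraMap F L).comp E.toRingHom
      = (RingEquiv.refl L).toRingHom.comp (algebraMap K L) := by
    ext k; rfl
  have hrk : Module.rank K L = Module.rank F L :=
    Algebra.rank_eq_of_equiv_equiv E (RingEquiv.refl L) hco
  have hr2 : Module.rank K L = ((2 : ℕ) : Cardinal) := by
    rw [hrk, ← Module.finrank_eq_rank, hfr]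
  haveI : FiniteDimensional K L := Module.finite_of_rank_eq_nat hr2
  have hrankK : finrank K L = 2 := finrank_eq_of_rank_eq hr2
  exact quad_aux (two_ne_zero_of_ringChar hchar) hrankK

/-- A field `K` is real closed iff `√-1 ∉ K` and `K(√-1)` is algebraically closed
(within a fixed algebraic closure, `K(√-1)` being the whole algebraic closure). -/
def RealClosed (K : Type*) [Field K] : Prop :=
  (¬ ∃ x : K, x ^ 2 = -1) ∧
  ∀ i : AlgebraicClosure K, i ^ 2 = -1 → IntermediateField.adjoin K {i} = ⊤

theorem stmt_18 (K : Type*) [Field K] :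
    RealClosed K ↔
      (PerfectField K ∧ ringChar K ≠ 2 ∧
        Nat.card (AlgebraicClosure K ≃ₐ[K] AlgebraicClosure K) = 2) := by
  constructor
  · rintro ⟨h1, h2⟩
    exact forward_aux K h1 h2
  · rintro ⟨hperf, hchar, hcard⟩
    exact backward_aux K hperf hchar hcard
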